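/- Fix α ∈ (1/2, 1), C ∈ ℝ and K > 0, and for n ≥ 2 set R_n = 2 ln n + C, r'_n = ln(K·n), and q_n = (cosh(α r'_n) − 1)/(cosh(α R_n) − 1). Then there exist a constant c₄ > 0 and N such that for all n ≥ N, if Y is a binomial random variable with parameters n and q_n (e.g. PMF.binomial), then P[ Y > 2e·c₄·n^{1−α} ] ≤ 2^{−2e·c₄·n^{1−α}}. (In the hyperbolic random graph model, the number of vertices lying in the disk B_0(r'_n) exceeds 2e c₄ n^{1−α} with probability at most 2^{−2e c₄ n^{1−α}}.) -/

import Mathlib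

open Real Finset

lemma aux_geom (m M : ℕ) : ∑ j ∈ Finset.Ico m M, (1/8 : ℝ)^j ≤ 2 * (1/8)^m := by
  rw [Finset.sum_Ico_eq_sum_range]
  have h1 : ∀ i ∈ Finset.range (M - m), (1/8 : ℝ)^(m + i) = (1/8:ℝ)^m * (1/8:ℝ)^i :=
    fun i _ => pow_add _ _ _
  rw [Finset.sum_congr rfl h1, ← Finset.mul_sum]
  have h2 : ∑ i ∈ Finset.range (M - m), (1/8 : ℝ)^i ≤ 2 := by
    have := geom_sum_eq (by norm_num : (1/8:ℝ) ≠ 1) (M - m)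
    rw [this]
    have : (0:ℝ) ≤ (1/8:ℝ)^(M-m) := by positivity
    rw [div_le_iff_of_neg (by norm_num : (1/8:ℝ) - 1 < 0)]
    linarith
  have h3 : (0:ℝ) ≤ (1/8:ℝ)^m := by positivity
  nlinarith

lemma aux_term (n k : ℕ) (q : ℝ) (hq : 0 ≤ q) (hk : 1 ≤ k)
    (h8 : 8 * (Real.exp 1 * ((n:ℝ) * q)) ≤ k) :
    (n.choose k : ℝ) * q ^ k ≤ (1/8 : ℝ)^k := by
  have hkpos : (0:ℝ) < (k:ℝ) := by exact_mod_cast hk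
  have hF : (0:ℝ) < (k.factorial : ℝ) := by exact_mod_cast k.factorial_pos
  have hfac : ((k:ℝ))^k ≤ Real.exp 1 ^ k * (k.factorial : ℝ) := by
    have h1 : ((k:ℝ))^k / (k.factorial : ℝ) ≤ Real.exp k := by
      refine le_trans ?_ (Real.sum_le_exp_of_nonneg hkpos.le (k+1))
      exact Finset.single_le_sum (f := fun i => (k:ℝ)^i / (i.factorial : ℝ))
        (fun i _ => by positivity) (Finset.self_mem_range_succ k)
    have h2 : Real.exp (k : ℝ) = Real.exp 1 ^ k := by
      rw [← Real.exp_nat_mul, mul_one]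
    rw [div_le_iff₀ hF, h2] at h1
    exact h1
  have hch : (n.choose k : ℝ) * (k.factorial : ℝ) ≤ (n:ℝ)^k := by
    have := Nat.descFactorial_le_pow n k
    rw [Nat.descFactorial_eq_factorial_mul_choose] at this
    have h2 : ((k.factorial * n.choose k : ℕ) : ℝ) ≤ ((n ^ k : ℕ) : ℝ) := Nat.cast_le.mpr this
    push_cast at h2
    linarith
  have h1 : (n.choose k : ℝ) ≤ (n:ℝ)^k / (k.factorial : ℝ) := by
    rw [le_div_iff₀ hF]; exact hch
  have hq8 : Real.exp 1 * ((n:ℝ) * q) / (k:ℝ) ≤ 1/8 := by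
    rw [div_le_iff₀ hkpos]; linarith
  calc (n.choose k : ℝ) * q ^ k
      ≤ ((n:ℝ)^k / (k.factorial : ℝ)) * q ^ k :=
        mul_le_mul_of_nonneg_right h1 (by positivity)
    _ = ((n:ℝ)*q)^k / (k.factorial : ℝ) := by rw [mul_pow]; ring
    _ ≤ ((n:ℝ)*q)^k * (Real.exp 1 ^ k / (k:ℝ)^k) := by
        rw [div_eq_mul_inv]
        apply mul_le_mul_of_nonneg_left _ (by positivity)
        have hkk : (0:ℝ) < (k:ℝ)^k := by positivity
        rw [inv_le_iff_one_le_mul₀ hF, div_mul_eq_mul_div, le_div_iff₀ hkk, one_mul]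
        linarith
    _ = (Real.exp 1 * ((n:ℝ)*q) / (k:ℝ))^k := by
        rw [div_pow, mul_pow]; ring
    _ ≤ (1/8 : ℝ)^k := pow_le_pow_left₀ (by positivity) hq8 k

set_option maxHeartbeats 1000000 in
/-- Chernoff-type upper-tail bound for the number of vertices of a hyperbolic random
graph lying in the disk `B_0(r'_n)` where `R_n = 2 ln n + C`, `r'_n = ln(K n)` and
`q_n = (cosh(α r'_n) - 1)/(cosh(α R_n) - 1)`: there is a constant `c₄ > 0` such that
for all sufficiently large `n`, a binomial random variable `Y` with parameters `n` and
`q_n` satisfies `P[Y > 2e c₄ n^(1-α)] ≤ 2^{-2e c₄ n^(1-α)}`. -/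
theorem binomial_inner_disk_upper_tail (α C K : ℝ)
    (hα : 1 / 2 < α) (hα1 : α < 1) (hK : 0 < K) :
    ∃ c₄ > 0, ∃ N : ℕ, ∀ n : ℕ, N ≤ n →
      ∀ h : ENNReal.ofReal
          ((Real.cosh (α * Real.log (K * n)) - 1) /
            (Real.cosh (α * (2 * Real.log n + C)) - 1)) ≤ 1,
        (PMF.binomial
            (ENNReal.ofReal
              ((Real.cosh (α * Real.log (K * n)) - 1) /
                (Real.cosh (α * (2 * Real.log n + C)) - 1))).toNNReal
            (by simpa using ENNReal.toNNReal_mono ENNReal.one_ne_top h) n).toMeasure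
            {k : Fin (n + 1) |
              2 * Real.exp 1 * c₄ * (n : ℝ) ^ (1 - α) < ((k : ℕ) : ℝ)}
          ≤ ENNReal.ofReal
              ((2 : ℝ) ^ (-(2 * Real.exp 1 * c₄ * (n : ℝ) ^ (1 - α)))) := by
  have hα0 : 0 < α := by linarith
  set c₄ : ℝ := 1 + 16 * Real.exp (α * Real.log K - α * C) with hc₄
  have hEpos : 0 < Real.exp (α * Real.log K - α * C) := Real.exp_pos _
  have hc₄pos : 0 < c₄ := by nlinarith
  have hc₄1 : 1 ≤ c₄ := by nlinarith
  set L : ℝ := (Real.log 4 - α * C) / (2 * α) with hL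
  refine ⟨c₄, hc₄pos, max 2 (max (⌈K⁻¹⌉₊ + 1) (⌈Real.exp L⌉₊ + 1)), fun n hn => ?_⟩
  have hn2 : 2 ≤ n := le_trans (le_max_left _ _) hn
  have hnpos : (0:ℝ) < n := by positivity
  have hn1 : (1:ℝ) ≤ n := by exact_mod_cast hn2.trans' (by norm_num)
  have hKn : 1 ≤ K * n := by
    have h1 : (⌈K⁻¹⌉₊ : ℝ) ≤ n := by
      exact_mod_cast le_trans (le_trans (Nat.le_succ _) (le_max_left _ _))
        (le_trans (le_max_right _ _) hn)
    have h2 : K⁻¹ ≤ n := le_trans (Nat.le_ceil _) h1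
    rw [← mul_inv_cancel₀ hK.ne']
    exact mul_le_mul_of_nonneg_left h2 hK.le
  have hLn : L ≤ Real.log n := by
    have h1 : (⌈Real.exp L⌉₊ : ℝ) ≤ n := by
      exact_mod_cast le_trans (le_trans (Nat.le_succ _) (le_max_right _ _))
        (le_trans (le_max_right _ _) hn)
    have h2 : Real.exp L ≤ n := le_trans (Nat.le_ceil _) h1
    calc L = Real.log (Real.exp L) := (Real.log_exp L).symm
      _ ≤ Real.log n := Real.log_le_log (Real.exp_pos _) h2
  set y : ℝ := α * (2 * Real.log n + C) with hy
  have hy4 : (4:ℝ) ≤ Real.exp y := by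
    have hlog4 : Real.log 4 ≤ y := by
      have h1 := mul_le_mul_of_nonneg_left hLn (le_of_lt (by positivity : (0:ℝ) < 2 * α))
      rw [hL, mul_div_cancel₀ _ (by positivity : (2 * α) ≠ 0)] at h1
      rw [hy]; nlinarith
    calc (4:ℝ) = Real.exp (Real.log 4) := (Real.exp_log (by norm_num)).symm
      _ ≤ Real.exp y := Real.exp_le_exp.mpr hlog4
  have hden : Real.exp y / 4 ≤ Real.cosh y - 1 := by
    rw [Real.cosh_eq]
    have h1 : (0:ℝ) ≤ Real.exp (-y) := (Real.exp_pos _).le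
    linarith
  have hdenpos : (0:ℝ) < Real.cosh y - 1 := lt_of_lt_of_le (by positivity) hden
  set x : ℝ := α * Real.log (K * n) with hx
  have hxnn : 0 ≤ x := mul_nonneg hα0.le (Real.log_nonneg hKn)
  have hnum : Real.cosh x - 1 ≤ Real.exp x := by
    rw [Real.cosh_eq]
    have h1 : Real.exp (-x) ≤ Real.exp x := Real.exp_le_exp.mpr (by linarith)
    have h2 : (0:ℝ) < Real.exp (-x) := Real.exp_pos _
    linarith
  set q : ℝ := (Real.cosh x - 1) / (Real.cosh y - 1) with hqdef
  have hq0 : 0 ≤ q := div_nonneg (by linarith [Real.one_le_cosh x]) hdenpos.le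
  have hE2 : (0:ℝ) < Real.exp (-(α * Real.log n)) := Real.exp_pos _
  have hqle : q ≤ c₄ / 4 * Real.exp (-(α * Real.log n)) := by
    have h1 : q ≤ Real.exp x / (Real.exp y / 4) :=
      div_le_div₀ (Real.exp_nonneg x) hnum (by positivity) hden
    have h2 : Real.exp x / (Real.exp y / 4) =
        4 * (Real.exp (α * Real.log K - α * C) * Real.exp (-(α * Real.log n))) := by
      rw [hx, hy, Real.log_mul hK.ne' (by positivity), ← Real.exp_add,
        div_div_eq_mul_div, mul_comm (Real.exp _) 4, mul_div_assoc, ← Real.exp_sub]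
      congr 1; ring
    rw [h2] at h1
    have h3 : 4 * Real.exp (α * Real.log K - α * C) ≤ c₄ / 4 := by
      rw [hc₄]; nlinarith
    calc q ≤ 4 * (Real.exp (α * Real.log K - α * C) * Real.exp (-(α * Real.log n))) := h1
      _ = (4 * Real.exp (α * Real.log K - α * C)) * Real.exp (-(α * Real.log n)) := by ring
      _ ≤ c₄ / 4 * Real.exp (-(α * Real.log n)) :=
          mul_le_mul_of_nonneg_right h3 hE2.le
  clear hnum hden hdenpos hqdef hy4 hxnn
  clear_value q x y
  set t : ℝ := 2 * Real.exp 1 * c₄ * (n : ℝ) ^ (1 - α) with ht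
  have hpow : (n:ℝ) ^ (1 - α) = (n:ℝ) * Real.exp (-(α * Real.log n)) := by
    rw [Real.rpow_def_of_pos hnpos,
      show Real.log n * (1 - α) = Real.log n + -(α * Real.log n) by ring,
      Real.exp_add, Real.exp_log hnpos]
  have he1 : (1:ℝ) ≤ Real.exp 1 := Real.one_le_exp (by norm_num)
  have ht1 : 1 ≤ t := by
    have hn1a : (1:ℝ) ≤ (n:ℝ) ^ (1 - α) := Real.one_le_rpow hn1 (by linarith)
    have h1 : (2:ℝ) * 1 ≤ (2 * Real.exp 1 * c₄) * ((n:ℝ) ^ (1 - α)) :=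
      mul_le_mul (by nlinarith) hn1a (by norm_num) (by positivity)
    rw [ht]; linarith
  have ht8 : 8 * (Real.exp 1 * ((n:ℝ) * q)) ≤ t := by
    have h1 : (n:ℝ) * q ≤ c₄ / 4 * ((n:ℝ) * Real.exp (-(α * Real.log n))) := by
      have h2 := mul_le_mul_of_nonneg_left hqle hnpos.le
      calc (n:ℝ) * q ≤ (n:ℝ) * (c₄ / 4 * Real.exp (-(α * Real.log n))) := h2
        _ = c₄ / 4 * ((n:ℝ) * Real.exp (-(α * Real.log n))) := by ring
    have h2 := mul_le_mul_of_nonneg_left h1 (by positivity : (0:ℝ) ≤ 8 * Real.exp 1)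
    calc 8 * (Real.exp 1 * ((n:ℝ) * q)) = (8 * Real.exp 1) * ((n:ℝ) * q) := by ring
      _ ≤ (8 * Real.exp 1) * (c₄ / 4 * ((n:ℝ) * Real.exp (-(α * Real.log n)))) := h2
      _ = 2 * Real.exp 1 * c₄ * ((n:ℝ) * Real.exp (-(α * Real.log n))) := by ring
      _ = t := by rw [ht, hpow]
  intro h
  set m : ℕ := ⌊t⌋₊ + 1 with hm
  have htm : t ≤ m := by
    rw [hm]; push_cast; exact (Nat.lt_floor_add_one t).le
  have hm1 : (1:ℝ) ≤ m := le_trans ht1 htm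
  have hP : (ENNReal.ofReal q).toNNReal ≤ 1 := by
    simpa using ENNReal.toNNReal_mono ENNReal.one_ne_top h
  set S : Set (Fin (n+1)) := {k : Fin (n + 1) | t < ((k : ℕ) : ℝ)} with hS
  have hmeas : (PMF.binomial (ENNReal.ofReal q).toNNReal hP n).toMeasure S
      = ∑ k ∈ S.toFinset, (PMF.binomial (ENNReal.ofReal q).toNNReal hP n) k := by
    rw [← PMF.toMeasure_apply_finset, Set.coe_toFinset]
  have hterm : ∀ k ∈ S.toFinset, (PMF.binomial (ENNReal.ofReal q).toNNReal hP n) k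
      ≤ ENNReal.ofReal ((1/8 : ℝ)^(k:ℕ)) := by
    intro k hk
    have hkS : t < ((k:ℕ):ℝ) := by simpa [hS] using (Set.mem_toFinset.mp hk)
    have hk1 : 1 ≤ (k:ℕ) := by
      have h1 : (1:ℝ) < ((k:ℕ):ℝ) := lt_of_le_of_lt ht1 hkS
      exact_mod_cast h1.le
    have h8k : 8 * (Real.exp 1 * ((n:ℝ) * q)) ≤ ((k:ℕ):ℝ) := le_trans ht8 hkS.le
    rw [PMF.binomial_apply]
    have hp : (ENNReal.ofReal q).toReal = q := ENNReal.toReal_ofReal hq0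
    calc (((ENNReal.ofReal q).toNNReal ^ (k:ℕ) * (1 - (ENNReal.ofReal q).toNNReal) ^ (((Fin.last n : Fin (n+1)) : ℕ) - (k:ℕ))
          * (n.choose (k:ℕ) : ℕ) : NNReal) : ENNReal)
        ≤ (((ENNReal.ofReal q).toNNReal ^ (k:ℕ) * 1 * (n.choose (k:ℕ) : ℕ) : NNReal) : ENNReal) := by
          gcongr
          exact pow_le_one₀ (by positivity) tsub_le_self
      _ = ENNReal.ofReal (q ^ (k:ℕ) * (n.choose (k:ℕ) : ℝ)) := by
          rw [← ENNReal.ofReal_coe_nnreal]; congr 1; push_cast; rw [hp]; ring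
      _ ≤ ENNReal.ofReal ((1/8 : ℝ)^(k:ℕ)) := by
          apply ENNReal.ofReal_le_ofReal
          rw [mul_comm]
          exact aux_term n (k:ℕ) q hq0 hk1 h8k
  have hsubset : S.toFinset.image Fin.val ⊆ Finset.Ico m (n+1) := by
    intro j hj
    rw [Finset.mem_image] at hj
    obtain ⟨k, hk, rfl⟩ := hj
    have hkS : t < ((k:ℕ):ℝ) := by simpa [hS] using (Set.mem_toFinset.mp hk)
    rw [Finset.mem_Ico]
    constructor
    · have := (Nat.floor_lt (le_trans (by norm_num) ht1)).mpr hkS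
      omega
    · exact k.isLt
  have hreal : ∑ k ∈ S.toFinset, (1/8 : ℝ)^(k:ℕ) ≤ (2:ℝ) ^ (-t) := by
    have h1 : ∑ k ∈ S.toFinset, (1/8 : ℝ)^(k:ℕ)
        = ∑ j ∈ S.toFinset.image Fin.val, (1/8 : ℝ)^j :=
      (Finset.sum_image (fun a _ b _ hab => Fin.val_injective hab)).symm
    have h2 : ∑ j ∈ S.toFinset.image Fin.val, (1/8 : ℝ)^j
        ≤ ∑ j ∈ Finset.Ico m (n+1), (1/8 : ℝ)^j :=
      Finset.sum_le_sum_of_subset_of_nonneg hsubset (fun i _ _ => by positivity)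
    have h3 := aux_geom m (n+1)
    have h4 : 2 * ((1:ℝ)/8)^m ≤ (2:ℝ) ^ (-t) := by
      have e0 : ((1:ℝ)/8) = (2:ℝ) ^ (-3 : ℝ) := by
        rw [Real.rpow_neg (by norm_num : (0:ℝ) ≤ 2),
          show (3:ℝ) = ((3:ℕ):ℝ) by norm_num, Real.rpow_natCast]
        norm_num
      have e1 : ((1:ℝ)/8)^m = (2:ℝ) ^ (-(3 * (m:ℝ))) := by
        rw [e0, ← Real.rpow_natCast ((2:ℝ) ^ (-3:ℝ)) m, ← Real.rpow_mul (by norm_num)]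
        congr 1; ring
      have e2 : 2 * ((1:ℝ)/8)^m = (2:ℝ) ^ (1 - 3 * (m:ℝ)) := by
        rw [e1, show (1 - 3*(m:ℝ)) = 1 + (-(3 * (m:ℝ))) by ring, Real.rpow_add (by norm_num),
          Real.rpow_one]
      rw [e2]
      apply Real.rpow_le_rpow_of_exponent_le (by norm_num)
      linarith
    calc ∑ k ∈ S.toFinset, (1/8 : ℝ)^(k:ℕ) = _ := h1
      _ ≤ ∑ j ∈ Finset.Ico m (n+1), (1/8 : ℝ)^j := h2
      _ ≤ 2 * ((1:ℝ)/8)^m := h3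
      _ ≤ (2:ℝ) ^ (-t) := h4
  calc (PMF.binomial (ENNReal.ofReal q).toNNReal hP n).toMeasure S
      = ∑ k ∈ S.toFinset, (PMF.binomial (ENNReal.ofReal q).toNNReal hP n) k := hmeas
    _ ≤ ∑ k ∈ S.toFinset, ENNReal.ofReal ((1/8 : ℝ)^(k:ℕ)) := Finset.sum_le_sum hterm
    _ = ENNReal.ofReal (∑ k ∈ S.toFinset, (1/8 : ℝ)^(k:ℕ)) :=
        (ENNReal.ofReal_sum_of_nonneg (fun i _ => by positivity)).symm
    _ ≤ ENNReal.ofReal ((2:ℝ) ^ (-t)) := ENNReal.ofReal_le_ofReal hreal
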